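/- arXiv:math/0408206 — 2 statements merged into one kernel-verified Lean document; each statement's English description precedes it below -/
import Mathlib

section
/- Let V be an 8-dimensional real inner product space with two orthogonal complex structures I and J (linear isometries with I∘I = J∘J = −id) that anticommute, I∘J = −J∘I, and set K = I∘J. Let E ⊆ V be a 4-dimensional subspace with I(E) = E. Then: (i) the quantity ‖P_E(JX)‖ is the same for every unit vector X ∈ E; call this common value c. (ii) The endomorphism T = P_E ∘ J restricted to E satisfies T ∘ T = −c²·id_E; that is, E has equal Kähler angles with respect to J, with cosθ_J = c. (iii) For every unit vector X ∈ E, ‖P_E(KX)‖ = ‖P_E(JX)‖; that is, the K-Kähler angle of E equals its J-Kähler angle. -/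
/-!
STATEMENT 3: `V` an 8-dimensional real inner product space with anticommuting
orthogonal complex structures `I`, `J`, and `K = I ∘ J`. If `E ⊆ V` is a
4-dimensional subspace with `I(E) = E`, then:
(i) `‖P_E (J X)‖` is the same for every unit vector `X ∈ E` (call it `c`);
(ii) `T ∘ T = −c²·id_E` where `T = P_E ∘ J` restricted to `E`;
(iii) for every unit vector `X ∈ E`, `‖P_E (K X)‖ = ‖P_E (J X)‖`.
-/

open scoped RealInnerProductSpace

noncomputable section

variable {V : Type*} [NormedAddCommGroup V] [InnerProductSpace ℝ V] [FiniteDimensional ℝ V]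

/-- `T_U = P_U ∘ J` restricted to the subspace `U`. -/
noncomputable def TU (J : V →ₗ[ℝ] V) (U : Submodule ℝ V) (X : U) : U :=
  Submodule.orthogonalProjectionOnto U (J X)

set_option maxHeartbeats 2000000 in
theorem stmt_3 (hV : Module.finrank ℝ V = 8)
    (I J : V →ₗ[ℝ] V)
    (hIorth : ∀ x y : V, ⟪I x, I y⟫ = ⟪x, y⟫)
    (hJorth : ∀ x y : V, ⟪J x, J y⟫ = ⟪x, y⟫)
    (hIsq : ∀ x : V, I (I x) = -x)
    (hJsq : ∀ x : V, J (J x) = -x)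
    (hanti : ∀ x : V, I (J x) = -(J (I x)))
    (E : Submodule ℝ V) (hEdim : Module.finrank ℝ E = 4)
    (hIE : E.map I = E) :
    ∃ c : ℝ,
      (∀ X : E, ‖X‖ = 1 → ‖(Submodule.orthogonalProjectionOnto E (J X) : E)‖ = c) ∧
      (∀ X : E, TU J E (TU J E X) = -(c ^ 2) • X) ∧
      (∀ X : E, ‖X‖ = 1 →
        ‖(Submodule.orthogonalProjectionOnto E ((I ∘ₗ J) X) : E)‖ =
        ‖(Submodule.orthogonalProjectionOnto E (J X) : E)‖) := by
  classical
  -- basic facts about I and J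
  have hInorm : ∀ v : V, ‖I v‖ = ‖v‖ := by
    intro v
    have h := hIorth v v
    rw [real_inner_self_eq_norm_sq, real_inner_self_eq_norm_sq] at h
    nlinarith [norm_nonneg (I v), norm_nonneg v]
  have hIskew : ∀ x y : V, ⟪I x, y⟫ = -⟪x, I y⟫ := by
    intro x y
    have h := hIorth x (I y)
    rw [hIsq, inner_neg_right] at h
    linarith
  have hJskew : ∀ x y : V, ⟪J x, y⟫ = -⟪x, J y⟫ := by
    intro x y
    have h := hJorth x (J y)
    rw [hJsq, inner_neg_right] at h
    linarith
  have hImem : ∀ x : V, x ∈ E → I x ∈ E := by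
    intro x hx
    rw [← hIE]; exact Submodule.mem_map_of_mem hx
  have hIperp : ∀ w : V, w ∈ Eᗮ → I w ∈ Eᗮ := by
    intro w hw
    rw [Submodule.mem_orthogonal]
    intro u hu
    rw [← hIE] at hu
    rcases hu with ⟨z, hz, rfl⟩
    rw [hIorth]
    exact (Submodule.mem_orthogonal E w).1 hw z hz
  -- orthogonal projection commutes with I
  have hPI : ∀ v : V, ((Submodule.orthogonalProjectionOnto E (I v) : V)) = I (Submodule.orthogonalProjectionOnto E v : V) := by
    intro v
    refine Submodule.eq_starProjection_of_mem_orthogonal (K := E)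
      (hImem _ (Submodule.orthogonalProjectionOnto E v).2) ?_
    have h : I v - I (Submodule.orthogonalProjectionOnto E v : V) = I (v - Submodule.orthogonalProjectionOnto E v) := by
      rw [map_sub]
    rw [h]
    exact hIperp _ (Submodule.sub_starProjection_mem_orthogonal (K := E) v)
  have hPinner : ∀ (v : V) (y : E), ⟪((Submodule.orthogonalProjectionOnto E v : V)), (y : V)⟫ = ⟪v, (y : V)⟫ := by
    intro v y
    have h : ⟪v - ((Submodule.orthogonalProjectionOnto E v : E) : V), (y : V)⟫ = 0 :=
      Submodule.starProjection_inner_eq_zero v y y.2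
    rw [inner_sub_left] at h
    linarith
  -- the operators on E
  set T : E → E := fun x => Submodule.orthogonalProjectionOnto E (J x) with hTdef
  set iE : E → E := fun x => ⟨I x, hImem _ x.2⟩ with hiEdef
  have hiEcoe : ∀ x : E, ((iE x : V)) = I (x : V) := fun _ => rfl
  have hTcoe : ∀ x : E, ((T x : V)) = ((Submodule.orthogonalProjectionOnto E (J (x : V)) : E) : V) :=
    fun _ => rfl
  have hT0 : T 0 = 0 := by
    simp [hTdef]
  have hTsmul : ∀ (c : ℝ) (x : E), T (c • x) = c • T x := by
    intro c x
    simp [hTdef, map_smul]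
  -- skewness of T (in E)
  have hskewE : ∀ x y : E, ⟪T x, y⟫ = -⟪x, T y⟫ := by
    intro x y
    rw [Submodule.coe_inner, Submodule.coe_inner]
    have h1 : ⟪(T x : V), (y : V)⟫ = ⟪J (x : V), (y : V)⟫ := by
      rw [hTcoe]; exact hPinner _ _
    have h2 : ⟪(T y : V), (x : V)⟫ = ⟪J (y : V), (x : V)⟫ := by
      rw [hTcoe]; exact hPinner _ _
    have h3 := hJskew ((x : V)) ((y : V))
    have h4 := real_inner_comm ((x : V)) ((T y : V))
    have h5 := real_inner_comm ((x : V)) (J (y : V))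
    linarith
  have hskewSelf : ∀ x : E, ⟪T x, x⟫ = 0 := by
    intro x
    have h := hskewE x x
    have h2 := real_inner_comm (T x) x
    linarith
  -- T anticommutes with iE
  have hTI : ∀ x : E, T (iE x) = -(iE (T x)) := by
    intro x
    apply Subtype.ext
    have h1 : J (I (x : V)) = -(I (J (x : V))) := by rw [hanti, neg_neg]
    have h2 : ((T (iE x) : V)) = ((Submodule.orthogonalProjectionOnto E (-(I (J (x : V)))) : E) : V) := by
      rw [hTcoe, hiEcoe, h1]
    rw [h2, map_neg]
    push_cast
    rw [hPI]
  -- iE facts in E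
  have hiEinner : ∀ x y : E, ⟪iE x, iE y⟫ = ⟪x, y⟫ := by
    intro x y
    rw [Submodule.coe_inner, Submodule.coe_inner, hiEcoe, hiEcoe, hIorth]
  have hiEskew : ∀ x y : E, ⟪iE x, y⟫ = -⟪x, iE y⟫ := by
    intro x y
    rw [Submodule.coe_inner, Submodule.coe_inner, hiEcoe, hiEcoe, hIskew]
  have hiEself : ∀ x : E, ⟪x, iE x⟫ = 0 := by
    intro x
    have h := hiEskew x x
    have h2 := real_inner_comm (iE x) x
    linarith
  have hiEnorm : ∀ x : E, ‖iE x‖ = ‖x‖ := by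
    intro x
    have h : ‖iE x‖ = ‖((iE x : V))‖ := rfl
    have h2 : ‖x‖ = ‖((x : V))‖ := rfl
    rw [h, h2, hiEcoe, hInorm]
  -- the key angle relation  ⟪T x, iE x⟫ = 0
  have hTIinner : ∀ x : E, ⟪T x, iE x⟫ = 0 := by
    intro x
    have h1 : ⟪T x, iE x⟫ = -⟪x, T (iE x)⟫ := hskewE x (iE x)
    rw [hTI x, inner_neg_right, neg_neg] at h1
    have h2 : ⟪iE x, T x⟫ = -⟪x, iE (T x)⟫ := hiEskew x (T x)
    have h3 := real_inner_comm (iE x) (T x)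
    linarith
  -- main pointwise lemma for unit vectors with T x ≠ 0
  have hmain1 : ∀ x : E, ‖x‖ = 1 → T x ≠ 0 → T (T x) = (-(‖T x‖ ^ 2) : ℝ) • x := by
    intro x hx ha
    set a := T x with haa
    have hna : ‖a‖ ≠ 0 := fun h => ha (norm_eq_zero.mp h)
    -- raw inner products
    have r1 : ⟪x, iE x⟫ = 0 := hiEself x
    have r1' : ⟪iE x, x⟫ = 0 := by rw [real_inner_comm]; exact r1
    have r2 : ⟪x, a⟫ = 0 := by
      have h := hskewSelf x; rw [← haa] at h
      rw [real_inner_comm]; exact h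
    have r2' : ⟪a, x⟫ = 0 := by rw [real_inner_comm]; exact r2
    have r3 : ⟪a, iE x⟫ = 0 := by
      have h := hTIinner x; rw [← haa] at h; exact h
    have r3' : ⟪iE x, a⟫ = 0 := by rw [real_inner_comm]; exact r3
    have r4 : ⟪x, iE a⟫ = 0 := by
      have h := hiEskew x a
      have h2 := real_inner_comm (iE x) a
      linarith
    have r4' : ⟪iE a, x⟫ = 0 := by rw [real_inner_comm]; exact r4
    have r5 : ⟪iE x, iE a⟫ = 0 := by rw [hiEinner]; exact r2
    have r5' : ⟪iE a, iE x⟫ = 0 := by rw [real_inner_comm]; exact r5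
    have r6 : ⟪a, iE a⟫ = 0 := hiEself a
    have r6' : ⟪iE a, a⟫ = 0 := by rw [real_inner_comm]; exact r6
    -- the orthonormal family
    set s : ℝ := ‖a‖⁻¹ with hs
    set v : Fin 4 → E := ![x, iE x, s • a, s • iE a] with hv
    have hv0 : v 0 = x := rfl
    have hv1 : v 1 = iE x := rfl
    have hv2 : v 2 = s • a := rfl
    have hv3 : v 3 = s • iE a := rfl
    have hsa : ‖s • a‖ = 1 := by
      rw [norm_smul, Real.norm_eq_abs, hs, abs_of_nonneg (inv_nonneg.2 (norm_nonneg a)),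
        inv_mul_cancel₀ hna]
    have hsia : ‖s • iE a‖ = 1 := by
      rw [norm_smul, Real.norm_eq_abs, hiEnorm, hs,
        abs_of_nonneg (inv_nonneg.2 (norm_nonneg a)), inv_mul_cancel₀ hna]
    have horth : Orthonormal ℝ v := by
      constructor
      · intro i
        fin_cases i
        · exact hx
        · show ‖iE x‖ = 1; rw [hiEnorm]; exact hx
        · exact hsa
        · exact hsia
      · intro i j hij
        fin_cases i <;> fin_cases j
        · exact absurd rfl hij
        · exact r1
        · show ⟪x, s • a⟫ = 0; rw [real_inner_smul_right, r2, mul_zero]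
        · show ⟪x, s • iE a⟫ = 0; rw [real_inner_smul_right, r4, mul_zero]
        · exact r1'
        · exact absurd rfl hij
        · show ⟪iE x, s • a⟫ = 0; rw [real_inner_smul_right, r3', mul_zero]
        · show ⟪iE x, s • iE a⟫ = 0; rw [real_inner_smul_right, r5, mul_zero]
        · show ⟪s • a, x⟫ = 0; rw [real_inner_smul_left, r2', mul_zero]
        · show ⟪s • a, iE x⟫ = 0; rw [real_inner_smul_left, r3, mul_zero]
        · exact absurd rfl hij
        · show ⟪s • a, s • iE a⟫ = 0
          rw [real_inner_smul_left, real_inner_smul_right, r6, mul_zero, mul_zero]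
        · show ⟪s • iE a, x⟫ = 0; rw [real_inner_smul_left, r4', mul_zero]
        · show ⟪s • iE a, iE x⟫ = 0; rw [real_inner_smul_left, r5', mul_zero]
        · show ⟪s • iE a, s • a⟫ = 0
          rw [real_inner_smul_left, real_inner_smul_right, r6', mul_zero, mul_zero]
        · exact absurd rfl hij
    have hspan : Submodule.span ℝ (Set.range v) = ⊤ :=
      horth.linearIndependent.span_eq_top_of_card_eq_finrank (by simp [hEdim])
    -- the vector u is orthogonal to all four basis vectors
    set u : E := T a + (‖a‖ ^ 2 : ℝ) • x with hu
    have hTa_x : ⟪T a, x⟫ = -(‖a‖ ^ 2) := by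
      have h := hskewE a x
      rw [← haa, real_inner_self_eq_norm_sq] at h
      exact h
    have hTa_iEx : ⟪T a, iE x⟫ = 0 := by
      have h := hskewE a (iE x)
      rw [hTI x, inner_neg_right, ← haa, r6] at h
      simpa using h
    have hTa_a : ⟪T a, a⟫ = 0 := hskewSelf a
    have hTa_iEa : ⟪T a, iE a⟫ = 0 := hTIinner a
    have hxx : ⟪x, x⟫ = 1 := by rw [real_inner_self_eq_norm_sq, hx]; norm_num
    have hu_x : ⟪u, x⟫ = 0 := by
      rw [hu, inner_add_left, real_inner_smul_left, hTa_x, hxx]; ring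
    have hu_ix : ⟪u, iE x⟫ = 0 := by
      rw [hu, inner_add_left, real_inner_smul_left, hTa_iEx, r1]; ring
    have hu_a : ⟪u, a⟫ = 0 := by
      rw [hu, inner_add_left, real_inner_smul_left, hTa_a, r2]; ring
    have hu_ia : ⟪u, iE a⟫ = 0 := by
      rw [hu, inner_add_left, real_inner_smul_left, hTa_iEa, r4]; ring
    have hinners : ∀ i, ⟪u, v i⟫ = 0 := by
      intro i
      fin_cases i
      · exact hu_x
      · exact hu_ix
      · show ⟪u, s • a⟫ = 0; rw [real_inner_smul_right, hu_a, mul_zero]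
      · show ⟪u, s • iE a⟫ = 0; rw [real_inner_smul_right, hu_ia, mul_zero]
    have hu0 : u = 0 := by
      have hmem : Submodule.span ℝ (Set.range v) ≤ (ℝ ∙ u)ᗮ := by
        rw [Submodule.span_le]
        rintro z ⟨i, rfl⟩
        rw [SetLike.mem_coe, Submodule.mem_orthogonal_singleton_iff_inner_right]
        exact hinners i
      rw [hspan, top_le_iff] at hmem
      have hmem2 : u ∈ (ℝ ∙ u)ᗮ := by rw [hmem]; trivial
      have h0 : ⟪u, u⟫ = 0 := Submodule.mem_orthogonal_singleton_iff_inner_right.1 hmem2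
      exact inner_self_eq_zero.1 h0
    -- conclude
    have hfin : T a + (‖a‖ ^ 2 : ℝ) • x = 0 := by rw [← hu]; exact hu0
    have hTa : T a = -((‖a‖ ^ 2 : ℝ) • x) := eq_neg_of_add_eq_zero_left hfin
    rw [hTa, neg_smul]
  -- homogeneous version
  have hmain : ∀ x : E, (‖x‖ ^ 2 : ℝ) • T (T x) = (-(‖T x‖ ^ 2) : ℝ) • x := by
    intro x
    rcases eq_or_ne x 0 with rfl | hx0
    · simp [hT0]
    · have ht : ‖x‖ ≠ 0 := norm_ne_zero_iff.mpr hx0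
      set xu : E := (‖x‖⁻¹ : ℝ) • x with hxu
      have hxu1 : ‖xu‖ = 1 := norm_smul_inv_norm (𝕜 := ℝ) hx0
      have hxeq : x = (‖x‖ : ℝ) • xu := by
        rw [hxu, smul_inv_smul₀ ht]
      have hTx : T x = (‖x‖ : ℝ) • T xu := by
        conv_lhs => rw [hxeq]
        exact hTsmul _ _
      have hnTx : ‖T x‖ = ‖x‖ * ‖T xu‖ := by
        rw [hTx, norm_smul, Real.norm_eq_abs, abs_of_nonneg (norm_nonneg x)]
      rcases eq_or_ne (T xu) 0 with h0 | h0
      · have hTx0 : T x = 0 := by rw [hTx, h0, smul_zero]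
        rw [hTx0, hT0, smul_zero, norm_zero]
        simp
      · have h1 := hmain1 xu hxu1 h0
        rw [hnTx]
        conv_lhs => rw [hTx, hTsmul, h1]
        conv_rhs => rw [hxeq]
        have hnn : ‖(‖x‖ : ℝ) • xu‖ = ‖x‖ := by
          rw [norm_smul, Real.norm_eq_abs, abs_of_nonneg (norm_nonneg x), hxu1, mul_one]
        simp only [smul_smul]
        congr 1
        rw [hnn]
        ring
  -- symmetry consequence
  have hkey : ∀ x y : E, (‖y‖ ^ 2 * ‖T x‖ ^ 2) * ⟪x, y⟫ = (‖x‖ ^ 2 * ‖T y‖ ^ 2) * ⟪x, y⟫ := by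
    intro x y
    have h1 : ⟪T (T x), y⟫ = ⟪x, T (T y)⟫ := by
      have ha := hskewE (T x) y
      have hb := hskewE x (T y)
      have hc := real_inner_comm (T x) (T y)
      linarith
    have e1 : (‖x‖ ^ 2 : ℝ) * ⟪T (T x), y⟫ = -(‖T x‖ ^ 2) * ⟪x, y⟫ := by
      calc (‖x‖ ^ 2 : ℝ) * ⟪T (T x), y⟫
          = ⟪(‖x‖ ^ 2 : ℝ) • T (T x), y⟫ := (real_inner_smul_left _ _ _).symm
        _ = ⟪(-(‖T x‖ ^ 2) : ℝ) • x, y⟫ := by rw [hmain x]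
        _ = -(‖T x‖ ^ 2) * ⟪x, y⟫ := real_inner_smul_left _ _ _
    have e2 : (‖y‖ ^ 2 : ℝ) * ⟪x, T (T y)⟫ = -(‖T y‖ ^ 2) * ⟪x, y⟫ := by
      calc (‖y‖ ^ 2 : ℝ) * ⟪x, T (T y)⟫
          = ⟪x, (‖y‖ ^ 2 : ℝ) • T (T y)⟫ := (real_inner_smul_right _ _ _).symm
        _ = ⟪x, (-(‖T y‖ ^ 2) : ℝ) • y⟫ := by rw [hmain y]
        _ = -(‖T y‖ ^ 2) * ⟪x, y⟫ := real_inner_smul_right _ _ _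
    linear_combination (‖y‖ ^ 2) * e1 - (‖x‖ ^ 2) * e2 - (‖x‖ ^ 2 * ‖y‖ ^ 2) * h1
  -- the norm of T is constant on unit vectors
  have hunit : ∀ x y : E, ‖x‖ = 1 → ‖y‖ = 1 → ‖T x‖ = ‖T y‖ := by
    intro x y hx hy
    have hsq : ‖T x‖ ^ 2 = ‖T y‖ ^ 2 := by
      rcases eq_or_ne (⟪x, y⟫) 0 with h0 | h0
      · have hz : ‖x + y‖ ^ 2 = 2 := by
          rw [norm_add_sq_real, hx, hy, h0]; ring
        have h0' : ⟪y, x⟫ = 0 := by rw [real_inner_comm]; exact h0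
        have hx1 : ⟪x, x + y⟫ = 1 := by
          rw [inner_add_right, real_inner_self_eq_norm_sq, hx, h0]; norm_num
        have hy1 : ⟪y, x + y⟫ = 1 := by
          rw [inner_add_right, real_inner_self_eq_norm_sq, hy, h0']; norm_num
        have hz1 := hkey x (x + y)
        have hz2 := hkey y (x + y)
        rw [hx1, hz, hx] at hz1
        rw [hy1, hz, hy] at hz2
        nlinarith [hz1, hz2]
      · have h := hkey x y
        rw [hx, hy] at h
        have h2 := mul_right_cancel₀ h0 h
        nlinarith [h2]
    have h := congrArg Real.sqrt hsq
    rwa [Real.sqrt_sq (norm_nonneg _), Real.sqrt_sq (norm_nonneg _)] at h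
  -- pick a unit vector
  have hnt : Nontrivial E := by
    have hp : 0 < Module.finrank ℝ E := by rw [hEdim]; norm_num
    exact Module.nontrivial_of_finrank_pos hp
  obtain ⟨x₀, hx₀⟩ := exists_ne (0 : E)
  set u₀ : E := (‖x₀‖⁻¹ : ℝ) • x₀ with hu₀
  have hu₀1 : ‖u₀‖ = 1 := norm_smul_inv_norm (𝕜 := ℝ) hx₀
  refine ⟨‖T u₀‖, ?_, ?_, ?_⟩
  · intro X hX
    exact hunit X u₀ hX hu₀1
  · intro X
    show T (T X) = -(‖T u₀‖ ^ 2) • X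
    rcases eq_or_ne X 0 with rfl | hX
    · rw [hT0, hT0, smul_zero]
    · have ht : ‖X‖ ≠ 0 := norm_ne_zero_iff.mpr hX
      have hXu1 : ‖(‖X‖⁻¹ : ℝ) • X‖ = 1 := norm_smul_inv_norm (𝕜 := ℝ) hX
      have hc : ‖T ((‖X‖⁻¹ : ℝ) • X)‖ = ‖T u₀‖ := hunit _ u₀ hXu1 hu₀1
      have hTX : ‖T X‖ = ‖T u₀‖ * ‖X‖ := by
        have hXeq : X = (‖X‖ : ℝ) • ((‖X‖⁻¹ : ℝ) • X) := by rw [smul_inv_smul₀ ht]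
        conv_lhs => rw [hXeq]
        rw [hTsmul, norm_smul, Real.norm_eq_abs, abs_of_nonneg (norm_nonneg X), hc]
        ring
      have h := hmain X
      rw [hTX] at h
      have h2 : ((-((‖T u₀‖ * ‖X‖) ^ 2)) : ℝ) • X
          = (‖X‖ ^ 2 : ℝ) • ((-(‖T u₀‖ ^ 2) : ℝ) • X) := by
        rw [smul_smul]; congr 1; ring
      rw [h2] at h
      have hn2 : (‖X‖ ^ 2 : ℝ) ≠ 0 := pow_ne_zero _ ht
      exact smul_right_injective E hn2 h
  · intro X _
    show ‖(Submodule.orthogonalProjectionOnto E (I (J (X : V))) : E)‖ =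
      ‖(Submodule.orthogonalProjectionOnto E (J (X : V)) : E)‖
    have h1 : ‖(Submodule.orthogonalProjectionOnto E (I (J (X : V))) : E)‖
        = ‖((Submodule.orthogonalProjectionOnto E (I (J (X : V))) : E) : V)‖ := rfl
    have h2 : ‖(Submodule.orthogonalProjectionOnto E (J (X : V)) : E)‖
        = ‖((Submodule.orthogonalProjectionOnto E (J (X : V)) : E) : V)‖ := rfl
    rw [h1, h2, hPI, hInorm]
end
end

section
/- Let u(x,y,z,w) = sin(x+z)·cosh(y+w), v(x,y,z,w) = −cos(x+z)·sinh(y+w), and f = (u, v, −u, −v) : ℝ⁴ → ℝ⁴. Then for every p = (x,y,z,w), the graph Γ_f has equal Kähler angles at p with cos²θ(p) = 4·t(p) / (1 + 4·t(p)), where t(p) = cos²(x+z) + sinh²(y+w). In particular cos²θ(p) < 1 for all p, so Γ_f has no J₀-complex points, while cos²θ attains every value in [0, 1). -/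
/-!
STATEMENT 7: With `u(x,y,z,w) = sin(x+z)·cosh(y+w)`, `v(x,y,z,w) = −cos(x+z)·sinh(y+w)`
and `f = (u, v, −u, −v)`, the graph `Γ_f` has equal Kähler angles at every
`p = (x,y,z,w)`, with `cos²θ(p) = 4t(p)/(1 + 4t(p))` where
`t(p) = cos²(x+z) + sinh²(y+w)`. In particular `cos²θ(p) < 1` for all `p`
(no `J₀`-complex points), while `cos²θ` attains every value in `[0,1)`.
-/

open scoped RealInnerProductSpace

noncomputable section

abbrev E4 : Type := EuclideanSpace ℝ (Fin 4)

noncomputable def mk4 (a b c d : ℝ) : E4 := (WithLp.equiv 2 (Fin 4 → ℝ)).symm ![a, b, c, d]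

noncomputable def Sp (f : E4 → E4) (p : E4) : E4 →L[ℝ] E4 :=
  Ring.inverse (1 + ContinuousLinearMap.adjoint (fderiv ℝ f p) * fderiv ℝ f p) *
    (ContinuousLinearMap.adjoint (fderiv ℝ f p) - fderiv ℝ f p)

noncomputable def u7 (p : E4) : ℝ := Real.sin (p 0 + p 2) * Real.cosh (p 1 + p 3)

noncomputable def v7 (p : E4) : ℝ := -(Real.cos (p 0 + p 2) * Real.sinh (p 1 + p 3))

noncomputable def f7 : E4 → E4 := fun p => mk4 (u7 p) (v7 p) (-(u7 p)) (-(v7 p))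

/-- `t(p) = cos²(x+z) + sinh²(y+w)` -/
noncomputable def t7 (p : E4) : ℝ := Real.cos (p 0 + p 2) ^ 2 + Real.sinh (p 1 + p 3) ^ 2

/-- the claimed value of `cos²θ` at `p` -/
noncomputable def cos2 (p : E4) : ℝ := 4 * t7 p / (1 + 4 * t7 p)

/-! ### Auxiliary material -/

noncomputable def A7 (a b : ℝ) : Matrix (Fin 4) (Fin 4) ℝ :=
  !![a, b, a, b; b, -a, b, -a; -a, -b, -a, -b; -b, a, -b, a]

noncomputable def B7 (a b : ℝ) : Matrix (Fin 4) (Fin 4) ℝ :=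
  !![1 - 2*(a^2+b^2)/(1+4*(a^2+b^2)), 0, -(2*(a^2+b^2)/(1+4*(a^2+b^2))), 0;
     0, 1 - 2*(a^2+b^2)/(1+4*(a^2+b^2)), 0, -(2*(a^2+b^2)/(1+4*(a^2+b^2)));
     -(2*(a^2+b^2)/(1+4*(a^2+b^2))), 0, 1 - 2*(a^2+b^2)/(1+4*(a^2+b^2)), 0;
     0, -(2*(a^2+b^2)/(1+4*(a^2+b^2))), 0, 1 - 2*(a^2+b^2)/(1+4*(a^2+b^2))]

noncomputable def S7m (a b : ℝ) : Matrix (Fin 4) (Fin 4) ℝ :=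
  B7 a b * (star (A7 a b) - A7 a b)

noncomputable def N7 (a b : ℝ) : Matrix (Fin 4) (Fin 4) ℝ :=
  !![-(4*a*(a^2+b^2)), -(4*b*(a^2+b^2)), -(2*a*(1+2*(a^2+b^2))), -(2*b*(1+2*(a^2+b^2)));
     -(4*b*(a^2+b^2)), 4*a*(a^2+b^2), -(2*b*(1+2*(a^2+b^2))), 2*a*(1+2*(a^2+b^2));
     2*a*(1+2*(a^2+b^2)), 2*b*(1+2*(a^2+b^2)), 4*a*(a^2+b^2), 4*b*(a^2+b^2);
     2*b*(1+2*(a^2+b^2)), -(2*a*(1+2*(a^2+b^2))), 4*b*(a^2+b^2), -(4*a*(a^2+b^2))]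

lemma denom_ne (a b : ℝ) : (1 + 4*(a^2+b^2)) ≠ 0 := by positivity

lemma hGB (a b : ℝ) : (1 + star (A7 a b) * A7 a b) * B7 a b = 1 := by
  have h := denom_ne a b
  ext i j
  fin_cases i <;> fin_cases j <;>
    simp [A7, B7, Matrix.mul_apply, Matrix.add_apply, Matrix.one_apply,
      Matrix.star_apply, Fin.sum_univ_four] <;>
    field_simp <;> ring

lemma hBG (a b : ℝ) : B7 a b * (1 + star (A7 a b) * A7 a b) = 1 := by
  have h := denom_ne a b
  ext i j
  fin_cases i <;> fin_cases j <;>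
    simp [A7, B7, Matrix.mul_apply, Matrix.add_apply, Matrix.one_apply,
      Matrix.star_apply, Fin.sum_univ_four] <;>
    field_simp <;> ring

lemma S7m_eq (a b : ℝ) : S7m a b = (1/(1+4*(a^2+b^2))) • N7 a b := by
  have h := denom_ne a b
  ext i j
  fin_cases i <;> fin_cases j <;>
    simp [S7m, A7, B7, N7, Matrix.mul_apply, Matrix.sub_apply, Matrix.star_apply,
      Matrix.smul_apply, Fin.sum_univ_four, smul_eq_mul] <;>
    field_simp <;> ring

lemma hNN (a b : ℝ) :
    N7 a b * N7 a b = (-(4*(a^2+b^2)*(1+4*(a^2+b^2)))) • 1 := by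
  ext i j
  fin_cases i <;> fin_cases j <;>
    simp [N7, Matrix.mul_apply, Matrix.one_apply, Matrix.smul_apply,
      Fin.sum_univ_four, smul_eq_mul] <;> ring

lemma hSS (a b : ℝ) :
    S7m a b * S7m a b = (-(4*(a^2+b^2)/(1+4*(a^2+b^2)))) • 1 := by
  have h := denom_ne a b
  rw [S7m_eq, Matrix.smul_mul, Matrix.mul_smul, hNN, smul_smul, smul_smul]
  congr 1
  field_simp

noncomputable def aa (p : E4) : ℝ := Real.cos (p 0 + p 2) * Real.cosh (p 1 + p 3)
noncomputable def bb (p : E4) : ℝ := Real.sin (p 0 + p 2) * Real.sinh (p 1 + p 3)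

noncomputable def L1 : E4 →L[ℝ] ℝ := EuclideanSpace.proj 0 + EuclideanSpace.proj 2
noncomputable def L2 : E4 →L[ℝ] ℝ := EuclideanSpace.proj 1 + EuclideanSpace.proj 3

lemma toE_apply (A : Matrix (Fin 4) (Fin 4) ℝ) (x : E4) (i : Fin 4) :
    Matrix.toEuclideanCLM (𝕜 := ℝ) A x i = ∑ j, A i j * x j := rfl

lemma hasFDerivAt_f7 (p : E4) :
    HasFDerivAt f7 (Matrix.toEuclideanCLM (𝕜 := ℝ) (A7 (aa p) (bb p))) p := by
  set q := p 0 + p 2 with hq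
  set r := p 1 + p 3 with hr
  have hL1 : HasFDerivAt (fun x : E4 => x 0 + x 2) L1 p := by
    have := ((EuclideanSpace.proj (𝕜 := ℝ) (0 : Fin 4)).hasFDerivAt (x := p)).add
      ((EuclideanSpace.proj (𝕜 := ℝ) (2 : Fin 4)).hasFDerivAt (x := p))
    exact this
  have hL2 : HasFDerivAt (fun x : E4 => x 1 + x 3) L2 p := by
    have := ((EuclideanSpace.proj (𝕜 := ℝ) (1 : Fin 4)).hasFDerivAt (x := p)).add
      ((EuclideanSpace.proj (𝕜 := ℝ) (3 : Fin 4)).hasFDerivAt (x := p))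
    exact this
  have hsin : HasFDerivAt (fun x : E4 => Real.sin (x 0 + x 2)) (Real.cos q • L1) p :=
    ((Real.hasDerivAt_sin q).comp_hasFDerivAt p hL1 :)
  have hcos : HasFDerivAt (fun x : E4 => Real.cos (x 0 + x 2)) ((-Real.sin q) • L1) p :=
    ((Real.hasDerivAt_cos q).comp_hasFDerivAt p hL1 :)
  have hcosh : HasFDerivAt (fun x : E4 => Real.cosh (x 1 + x 3)) (Real.sinh r • L2) p :=
    ((Real.hasDerivAt_cosh r).comp_hasFDerivAt p hL2 :)
  have hsinh : HasFDerivAt (fun x : E4 => Real.sinh (x 1 + x 3)) (Real.cosh r • L2) p :=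
    ((Real.hasDerivAt_sinh r).comp_hasFDerivAt p hL2 :)
  have hu : HasFDerivAt u7
      (Real.sin q • (Real.sinh r • L2) + Real.cosh r • (Real.cos q • L1)) p := hsin.mul hcosh
  have hv : HasFDerivAt v7
      (-(Real.cos q • (Real.cosh r • L2) + Real.sinh r • ((-Real.sin q) • L1))) p :=
    (hcos.mul hsinh).neg
  set Du := Real.sin q • (Real.sinh r • L2) + Real.cosh r • (Real.cos q • L1) with hDu
  set Dv := -(Real.cos q • (Real.cosh r • L2) + Real.sinh r • ((-Real.sin q) • L1)) with hDv
  have hg : HasFDerivAt (fun x : E4 => ![u7 x, v7 x, -(u7 x), -(v7 x)])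
      (ContinuousLinearMap.pi ![Du, Dv, -Du, -Dv]) p := by
    rw [hasFDerivAt_pi']
    intro i
    fin_cases i <;>
      simp only [Matrix.cons_val_zero, Matrix.cons_val_one, Matrix.head_cons,
        Matrix.cons_val_two, Matrix.tail_cons, Matrix.cons_val_three,
        ContinuousLinearMap.proj_pi, Fin.isValue] <;>
      [exact hu; exact hv; exact hu.neg; exact hv.neg]
  have hcomp := ((PiLp.continuousLinearEquiv 2 ℝ (fun _ : Fin 4 => ℝ)).symm
    |>.toContinuousLinearMap.hasFDerivAt
      (x := (fun x : E4 => ![u7 x, v7 x, -(u7 x), -(v7 x)]) p)).comp p hg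
  refine (hcomp.congr_fderiv ?_ : HasFDerivAt f7 _ p)
  ext x i
  fin_cases i <;>
    simp [toE_apply, Fin.sum_univ_four, A7, aa, bb, Du, Dv, L1, L2, Matrix.cons_val_zero,
      ContinuousLinearMap.pi_apply, ContinuousLinearMap.smul_apply,
      ContinuousLinearMap.add_apply, PiLp.continuousLinearEquiv_symm_apply] <;> ring

lemma fderiv_f7 (p : E4) :
    fderiv ℝ f7 p = Matrix.toEuclideanCLM (𝕜 := ℝ) (A7 (aa p) (bb p)) :=
  (hasFDerivAt_f7 p).fderiv

lemma Sp_eq (p : E4) :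
    Sp f7 p = Matrix.toEuclideanCLM (𝕜 := ℝ) (S7m (aa p) (bb p)) := by
  have hinv : Ring.inverse (Matrix.toEuclideanCLM (𝕜 := ℝ)
        (1 + star (A7 (aa p) (bb p)) * A7 (aa p) (bb p)))
      = Matrix.toEuclideanCLM (𝕜 := ℝ) (B7 (aa p) (bb p)) := by
    exact Ring.inverse_unit
      ⟨Matrix.toEuclideanCLM (𝕜 := ℝ) (1 + star (A7 (aa p) (bb p)) * A7 (aa p) (bb p)),
       Matrix.toEuclideanCLM (𝕜 := ℝ) (B7 (aa p) (bb p)),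
       by rw [← map_mul, hGB, map_one],
       by rw [← map_mul, hBG, map_one]⟩
  unfold Sp
  rw [fderiv_f7, ← ContinuousLinearMap.star_eq_adjoint, ← map_star]
  rw [show (1 : E4 →L[ℝ] E4) + Matrix.toEuclideanCLM (𝕜 := ℝ) (star (A7 (aa p) (bb p))) *
        Matrix.toEuclideanCLM (𝕜 := ℝ) (A7 (aa p) (bb p))
      = Matrix.toEuclideanCLM (𝕜 := ℝ)
        (1 + star (A7 (aa p) (bb p)) * A7 (aa p) (bb p)) by rw [map_add, map_mul, map_one]]
  rw [hinv, ← map_sub, ← map_mul]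
  rfl

lemma hst (p : E4) : (aa p)^2 + (bb p)^2 = t7 p := by
  unfold aa bb t7
  nlinarith [Real.cosh_sq (p 1 + p 3), Real.sin_sq_add_cos_sq (p 0 + p 2)]

lemma t7_nonneg (p : E4) : 0 ≤ t7 p := by unfold t7; positivity

theorem stmt_7 :
    (∀ p : E4, Sp f7 p * Sp f7 p = -(cos2 p) • 1) ∧
    (∀ p : E4, cos2 p < 1) ∧
    (∀ p : E4, fderiv ℝ f7 p * fderiv ℝ f7 p ≠ -1) ∧
    (∀ r : ℝ, 0 ≤ r → r < 1 → ∃ p : E4, cos2 p = r) := by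
  refine ⟨?_, ?_, ?_, ?_⟩
  · intro p
    rw [Sp_eq, ← map_mul, hSS]
    rw [map_smul, map_one]
    have h := hst p
    unfold cos2
    rw [h]
  · intro p
    have h := t7_nonneg p
    unfold cos2
    rw [div_lt_one (by linarith)]
    linarith
  · intro p hEq
    rw [fderiv_f7, ← map_mul] at hEq
    have hneg : (-1 : E4 →L[ℝ] E4) = Matrix.toEuclideanCLM (n := Fin 4) (𝕜 := ℝ) (-1) := by
      rw [map_neg, map_one]
    rw [hneg] at hEq
    have h2 : A7 (aa p) (bb p) * A7 (aa p) (bb p) = -1 :=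
      (Matrix.toEuclideanCLM (n := Fin 4) (𝕜 := ℝ)).injective hEq
    have h3 := congrArg (fun M : Matrix (Fin 4) (Fin 4) ℝ => M 0 0) h2
    simp [A7, Matrix.mul_apply, Matrix.neg_apply, Matrix.one_apply,
      Fin.sum_univ_four] at h3
  · intro r hr0 hr1
    have h1r : (0 : ℝ) < 1 - r := by linarith
    set x := r / (4 * (1 - r)) with hx
    have hx0 : 0 ≤ x := div_nonneg hr0 (by linarith)
    refine ⟨mk4 (Real.pi / 2) (Real.arsinh (Real.sqrt x)) 0 0, ?_⟩
    have ht : t7 (mk4 (Real.pi / 2) (Real.arsinh (Real.sqrt x)) 0 0) = x := by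
      simp [t7, mk4, Real.cos_pi_div_two, Real.sinh_arsinh, Real.sq_sqrt hx0]
    unfold cos2
    rw [ht, hx]
    field_simp
    ring
end
end
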